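/- Let M ≥ 1, K ≥ 1, and for k = 1, …, K let c^{(k)} ∈ ℂ^M and v_k(f) = Σ_{i=0}^{M−1} c^{(k)}_i·exp(2πi·f·i). Define S(f) = sqrt( Σ_{k=1}^K |v_k(f)|² ). If N is a positive integer with N > 2πMK, then max_{j ∈ {0,1,…,N−1}} S(j/N) ≤ sup_{f ∈ [0,1)} S(f) ≤ (1 − 2πMK/N)^{−1/2} · max_{j ∈ {0,1,…,N−1}} S(j/N). -/

import Mathlib

open Complex

section helpers
open intervalIntegral


lemma intA (n : ℤ) : (∫ t in (0:ℝ)..1, Complex.exp (2*Real.pi*Complex.I*t*n))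
    = if n = 0 then 1 else 0 := by
  rcases eq_or_ne n 0 with h | h
  · simp [h]
  · rw [if_neg h]
    have hc : (2*(Real.pi:ℂ)*Complex.I*n) ≠ 0 := by
      simp [Real.pi_ne_zero, Complex.I_ne_zero, h]
    have key := integral_exp_mul_complex (a := 0) (b := 1) hc
    have h1 : ∀ t : ℝ, 2*(Real.pi:ℂ)*Complex.I*t*n = (2*(Real.pi:ℂ)*Complex.I*n) * t := by
      intro t; ring
    simp only [h1]
    rw [key]
    have h2 : Complex.exp (2*(Real.pi:ℂ)*Complex.I*n*(1:ℝ)) = 1 := by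
      have := Complex.exp_int_mul_two_pi_mul_I n
      rw [← this]; push_cast; ring_nf
    have h3 : Complex.exp (2*(Real.pi:ℂ)*Complex.I*n*(0:ℝ)) = 1 := by
      norm_num
    rw [h2, h3]; simp

-- counting lemma
lemma countL (M : ℕ) (i : Fin M) :
    (∑ j : Fin M, ∑ l : Fin M, if ((M:ℤ)+j-l-i = 0) then (1:ℂ) else 0) = (i:ℕ) := by
  have inner : ∀ j : Fin M,
      (∑ l : Fin M, if ((M:ℤ)+j-l-i = 0) then (1:ℂ) else 0)
        = if (j:ℕ) < (i:ℕ) then 1 else 0 := by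
    intro j
    rcases lt_or_ge (j:ℕ) (i:ℕ) with hj | hj
    · rw [if_pos hj]
      have hi := i.isLt
      have hlt : M + (j:ℕ) - i < M := by omega
      rw [Finset.sum_eq_single (⟨M + (j:ℕ) - i, hlt⟩ : Fin M)]
      · rw [if_pos]; push_cast; omega
      · intro l _ hne
        rw [if_neg]
        intro hcon
        apply hne
        apply Fin.ext
        show (l:ℕ) = M + (j:ℕ) - (i:ℕ)
        omega
      · intro habs; exact absurd (Finset.mem_univ _) habs
    · rw [if_neg (not_lt.mpr hj)]
      apply Finset.sum_eq_zero
      intro l _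
      rw [if_neg]
      intro hcon
      have hl := l.isLt
      have hi := i.isLt
      omega
  rw [Finset.sum_congr rfl (fun j _ => inner j)]
  rw [Fin.sum_univ_eq_sum_range (fun j => if j < (i:ℕ) then (1:ℂ) else 0)]
  rw [← Finset.sum_filter]
  have : Finset.filter (fun j => j < (i:ℕ)) (Finset.range M) = Finset.range i := by
    ext j; simp; omega
  rw [this]
  simp



lemma convId (M : ℕ) (c : Fin M → ℂ) (x t : ℝ) :
    (∑ i : Fin M, c i * Complex.exp (2*Real.pi*Complex.I*(x-t)*i)) *
      (2*Real.pi*Complex.I * Complex.exp (2*Real.pi*Complex.I*t*M)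
        * (∑ j : Fin M, Complex.exp (2*Real.pi*Complex.I*t*j))
        * (starRingEnd ℂ) (∑ l : Fin M, Complex.exp (2*Real.pi*Complex.I*t*l)))
    = ∑ l : Fin M, ∑ j : Fin M, ∑ i : Fin M,
        c i * (2*Real.pi*Complex.I) *
          (Complex.exp (2*Real.pi*Complex.I*x*i)
            * Complex.exp (2*Real.pi*Complex.I*t*((((M:ℤ)+j-l-i) : ℤ):ℂ))) := by
  have hconj : ∀ (r : ℝ) (n : Fin M),
      (starRingEnd ℂ) (Complex.exp (2*Real.pi*Complex.I*r*n))
        = Complex.exp (-(2*(Real.pi:ℂ)*Complex.I*r*n)) := by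
    intro r n
    rw [← Complex.exp_conj]
    congr 1
    have h : (2*(Real.pi:ℂ)*Complex.I*r*n) = ((2*Real.pi*r*n : ℝ) : ℂ) * Complex.I := by
      push_cast; ring
    rw [h, map_mul, Complex.conj_I, Complex.conj_ofReal]
    ring
  have hmul : ∀ (a b p q r s : ℂ),
      a * Complex.exp p * (b * Complex.exp q * Complex.exp r * Complex.exp s)
        = a * b * (Complex.exp (p+q+r) * Complex.exp s) := by
    intro a b p q r s
    rw [Complex.exp_add, Complex.exp_add]; ring
  simp only [map_sum, hconj, Finset.sum_mul, Finset.mul_sum]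
  refine Finset.sum_congr rfl fun l _ => ?_
  refine Finset.sum_congr rfl fun j _ => ?_
  refine Finset.sum_congr rfl fun i _ => ?_
  rw [hmul]
  congr 1
  rw [← Complex.exp_add, ← Complex.exp_add]
  congr 1
  push_cast
  ring

lemma contExp (n : ℂ) : Continuous fun t : ℝ => Complex.exp (2*Real.pi*Complex.I*t*n) := by
  fun_prop

lemma keyId (M : ℕ) (c : Fin M → ℂ) (x : ℝ) :
    ∑ i : Fin M, c i * (2*Real.pi*Complex.I*i) * Complex.exp (2*Real.pi*Complex.I*x*i)
    = ∫ t in (0:ℝ)..1, (∑ i : Fin M, c i * Complex.exp (2*Real.pi*Complex.I*(x-t)*i)) *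
      (2*Real.pi*Complex.I * Complex.exp (2*Real.pi*Complex.I*t*M)
        * (∑ j : Fin M, Complex.exp (2*Real.pi*Complex.I*t*j))
        * (starRingEnd ℂ) (∑ l : Fin M, Complex.exp (2*Real.pi*Complex.I*t*l))) := by
  have hcont : ∀ (l j i : Fin M), Continuous fun t : ℝ =>
      c i * (2*Real.pi*Complex.I) *
        (Complex.exp (2*Real.pi*Complex.I*x*i)
          * Complex.exp (2*Real.pi*Complex.I*t*((((M:ℤ)+j-l-i) : ℤ):ℂ))) := by
    intro l j i
    exact (continuous_const.mul ((continuous_const).mul (contExp _)))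
  rw [intervalIntegral.integral_congr (g := fun t => ∑ l : Fin M, ∑ j : Fin M, ∑ i : Fin M,
        c i * (2*Real.pi*Complex.I) *
          (Complex.exp (2*Real.pi*Complex.I*x*i)
            * Complex.exp (2*Real.pi*Complex.I*t*((((M:ℤ)+j-l-i) : ℤ):ℂ))))
      (fun t _ => convId M c x t)]
  rw [intervalIntegral.integral_finset_sum (fun l _ =>
    ((continuous_finset_sum _ fun j _ => continuous_finset_sum _ fun i _ =>
      hcont l j i).intervalIntegrable _ _))]
  have step2 : ∀ l : Fin M, (∫ t in (0:ℝ)..1, ∑ j : Fin M, ∑ i : Fin M,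
      c i * (2*Real.pi*Complex.I) *
        (Complex.exp (2*Real.pi*Complex.I*x*i)
          * Complex.exp (2*Real.pi*Complex.I*t*((((M:ℤ)+j-l-i) : ℤ):ℂ))))
      = ∑ j : Fin M, ∑ i : Fin M,
        c i * (2*Real.pi*Complex.I) * Complex.exp (2*Real.pi*Complex.I*x*i)
          * (if (((M:ℤ)+j-l-i) : ℤ) = 0 then 1 else 0) := by
    intro l
    rw [intervalIntegral.integral_finset_sum (fun j _ =>
      ((continuous_finset_sum _ fun i _ => hcont l j i).intervalIntegrable _ _))]
    refine Finset.sum_congr rfl fun j _ => ?_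
    rw [intervalIntegral.integral_finset_sum (fun i _ =>
      ((hcont l j i).intervalIntegrable _ _))]
    refine Finset.sum_congr rfl fun i _ => ?_
    have harr : ∀ t : ℝ, c i * (2*Real.pi*Complex.I) *
        (Complex.exp (2*Real.pi*Complex.I*x*i)
          * Complex.exp (2*Real.pi*Complex.I*t*((((M:ℤ)+j-l-i) : ℤ):ℂ)))
        = (c i * (2*Real.pi*Complex.I) * Complex.exp (2*Real.pi*Complex.I*x*i))
            * Complex.exp (2*Real.pi*Complex.I*t*((((M:ℤ)+j-l-i) : ℤ):ℂ)) := by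
      intro t; ring
    simp only [harr]
    rw [intervalIntegral.integral_const_mul, intA]
  rw [Finset.sum_congr rfl (fun l _ => step2 l)]
  rw [Finset.sum_congr rfl (fun l (_ : l ∈ Finset.univ) => Finset.sum_comm)]
  rw [Finset.sum_comm]
  refine Finset.sum_congr rfl fun i _ => ?_
  have : (∑ l : Fin M, ∑ j : Fin M,
      c i * (2*Real.pi*Complex.I) * Complex.exp (2*Real.pi*Complex.I*x*i)
        * (if (((M:ℤ)+j-l-i) : ℤ) = 0 then 1 else 0))
      = c i * (2*Real.pi*Complex.I) * Complex.exp (2*Real.pi*Complex.I*x*i)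
        * (∑ l : Fin M, ∑ j : Fin M, if (((M:ℤ)+j-l-i) : ℤ) = 0 then (1:ℂ) else 0) := by
    simp only [Finset.mul_sum]
  rw [this, Finset.sum_comm, countL]
  ring

lemma normSqInt (M : ℕ) :
    (∫ t in (0:ℝ)..1, (Complex.normSq (∑ j : Fin M, Complex.exp (2*Real.pi*Complex.I*t*j)) : ℝ))
      = M := by
  have hconj : ∀ (r : ℝ) (n : Fin M),
      (starRingEnd ℂ) (Complex.exp (2*Real.pi*Complex.I*r*n))
        = Complex.exp (-(2*(Real.pi:ℂ)*Complex.I*r*n)) := by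
    intro r n
    rw [← Complex.exp_conj]
    congr 1
    have h : (2*(Real.pi:ℂ)*Complex.I*r*n) = ((2*Real.pi*r*n : ℝ) : ℂ) * Complex.I := by
      push_cast; ring
    rw [h, map_mul, Complex.conj_I, Complex.conj_ofReal]
    ring
  have expand : ∀ t : ℝ,
      ((Complex.normSq (∑ j : Fin M, Complex.exp (2*Real.pi*Complex.I*t*j)) : ℝ) : ℂ)
        = ∑ j : Fin M, ∑ l : Fin M,
            Complex.exp (2*Real.pi*Complex.I*t*((((j:ℤ)-l) : ℤ):ℂ)) := by
    intro t
    rw [← Complex.mul_conj]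
    rw [map_sum, Finset.sum_mul]
    refine Finset.sum_congr rfl fun j _ => ?_
    rw [Finset.mul_sum]
    refine Finset.sum_congr rfl fun l _ => ?_
    rw [hconj, ← Complex.exp_add]
    congr 1
    push_cast
    ring
  have hC : (∫ t in (0:ℝ)..1,
      ((Complex.normSq (∑ j : Fin M, Complex.exp (2*Real.pi*Complex.I*t*j)) : ℝ) : ℂ)) = (M:ℂ) := by
    rw [intervalIntegral.integral_congr (g := fun t => ∑ j : Fin M, ∑ l : Fin M,
        Complex.exp (2*Real.pi*Complex.I*t*((((j:ℤ)-l) : ℤ):ℂ))) (fun t _ => expand t)]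
    rw [intervalIntegral.integral_finset_sum (fun j _ =>
      ((continuous_finset_sum _ fun l _ => contExp _).intervalIntegrable _ _))]
    have : ∀ j : Fin M, (∫ t in (0:ℝ)..1, ∑ l : Fin M,
        Complex.exp (2*Real.pi*Complex.I*t*((((j:ℤ)-l) : ℤ):ℂ)))
        = ∑ l : Fin M, if ((j:ℤ)-l = 0) then (1:ℂ) else 0 := by
      intro j
      rw [intervalIntegral.integral_finset_sum (fun l _ => (contExp _).intervalIntegrable _ _)]
      exact Finset.sum_congr rfl fun l _ => intA _
    rw [Finset.sum_congr rfl (fun j _ => this j)]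
    have : ∀ j : Fin M, (∑ l : Fin M, if ((j:ℤ)-l = 0) then (1:ℂ) else 0) = 1 := by
      intro j
      rw [Finset.sum_eq_single j]
      · simp
      · intro l _ hne
        rw [if_neg]
        intro hcon
        exact hne (by apply Fin.ext; omega)
      · intro h; exact absurd (Finset.mem_univ _) h
    rw [Finset.sum_congr rfl (fun j _ => this j)]
    simp
  rw [intervalIntegral.integral_ofReal] at hC
  exact_mod_cast hC

lemma dnorm (M : ℕ) (c : Fin M → ℂ) (C : ℝ)
    (hC : ∀ y : ℝ, ‖∑ i : Fin M, c i * Complex.exp (2*Real.pi*Complex.I*y*i)‖ ≤ C) (x : ℝ) :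
    ‖∑ i : Fin M, c i * (2*Real.pi*Complex.I*i) * Complex.exp (2*Real.pi*Complex.I*x*i)‖
      ≤ 2*Real.pi*M*C := by
  rw [keyId]
  set D : ℝ → ℂ := fun t => ∑ j : Fin M, Complex.exp (2*Real.pi*Complex.I*t*j) with hD
  have contD : Continuous D := continuous_finset_sum _ fun j _ => contExp _
  have contv : Continuous fun t : ℝ =>
      ∑ i : Fin M, c i * Complex.exp (2*Real.pi*Complex.I*(x-t)*i) := by
    apply continuous_finset_sum _ fun i _ => ?_
    apply continuous_const.mul
    apply Complex.continuous_exp.comp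
    fun_prop
  have contF : Continuous fun t : ℝ =>
      (∑ i : Fin M, c i * Complex.exp (2*Real.pi*Complex.I*(x-t)*i)) *
        (2*Real.pi*Complex.I * Complex.exp (2*Real.pi*Complex.I*t*M) * D t
          * (starRingEnd ℂ) (D t)) := by
    apply contv.mul
    exact ((continuous_const.mul (contExp _)).mul contD).mul (Complex.continuous_conj.comp contD)
  have h1 := intervalIntegral.norm_integral_le_integral_norm (μ := MeasureTheory.volume)
    (f := fun t => (∑ i : Fin M, c i * Complex.exp (2*Real.pi*Complex.I*(x-t)*i)) *
        (2*Real.pi*Complex.I * Complex.exp (2*Real.pi*Complex.I*t*M) * D t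
          * (starRingEnd ℂ) (D t))) (a := 0) (b := 1) (by norm_num)
  refine le_trans h1 ?_
  have hQ : ∀ t : ℝ, ‖2*Real.pi*Complex.I * Complex.exp (2*Real.pi*Complex.I*t*M) * D t
      * (starRingEnd ℂ) (D t)‖ = 2*Real.pi*(Complex.normSq (D t)) := by
    intro t
    rw [norm_mul, norm_mul, norm_mul]
    have e1 : ‖(2*Real.pi*Complex.I : ℂ)‖ = 2*Real.pi := by
      simp only [norm_mul, Complex.norm_I, Complex.norm_real, Real.norm_eq_abs,
        Complex.norm_two, _root_.abs_of_nonneg Real.pi_pos.le, mul_one]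
    have e2 : ‖Complex.exp (2*Real.pi*Complex.I*t*M)‖ = 1 := by
      have h : (2*(Real.pi:ℂ)*Complex.I*t*M) = ((2*Real.pi*t*M : ℝ) : ℂ) * Complex.I := by
        push_cast; ring
      rw [h, Complex.norm_exp_ofReal_mul_I]
    have e3 : ‖(starRingEnd ℂ) (D t)‖ = ‖D t‖ := RCLike.norm_conj _
    rw [e1, e2, e3, Complex.normSq_eq_norm_sq]
    simp
    ring
  have C0 : 0 ≤ C := le_trans (norm_nonneg _) (hC 0)
  have hptw : ∀ t ∈ Set.Icc (0:ℝ) 1,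
      ‖(∑ i : Fin M, c i * Complex.exp (2*Real.pi*Complex.I*(x-t)*i)) *
        (2*Real.pi*Complex.I * Complex.exp (2*Real.pi*Complex.I*t*M) * D t
          * (starRingEnd ℂ) (D t))‖ ≤ C * (2*Real.pi*(Complex.normSq (D t))) := by
    intro t _
    rw [norm_mul, hQ]
    have hx := hC (x - t)
    rw [Complex.ofReal_sub] at hx
    exact mul_le_mul_of_nonneg_right hx (mul_nonneg (by positivity) (Complex.normSq_nonneg _))
  have intg : IntervalIntegrable (fun t : ℝ => C * (2*Real.pi*(Complex.normSq (D t))))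
      MeasureTheory.volume 0 1 :=
    (continuous_const.mul (continuous_const.mul
      (Complex.continuous_normSq.comp contD))).intervalIntegrable _ _
  have h2 := intervalIntegral.integral_mono_on (by norm_num : (0:ℝ) ≤ 1)
    (contF.norm.intervalIntegrable _ _) intg hptw
  refine le_trans h2 ?_
  rw [intervalIntegral.integral_const_mul, intervalIntegral.integral_const_mul, normSqInt]
  rw [← hD] at *
  ring_nf
  exact le_refl _

lemma lipsch (M : ℕ) (c : Fin M → ℂ) (C : ℝ)
    (hC : ∀ y : ℝ, ‖∑ i : Fin M, c i * Complex.exp (2*Real.pi*Complex.I*y*i)‖ ≤ C) (a b : ℝ) :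
    ‖(∑ i : Fin M, c i * Complex.exp (2*Real.pi*Complex.I*b*i))
      - ∑ i : Fin M, c i * Complex.exp (2*Real.pi*Complex.I*a*i)‖
      ≤ 2*Real.pi*M*C * |b - a| := by
  have hterm : ∀ (i : Fin M) (y : ℝ),
      HasDerivAt (fun s : ℝ => c i * Complex.exp (2*Real.pi*Complex.I*s*i))
        (c i * (2*Real.pi*Complex.I*i) * Complex.exp (2*Real.pi*Complex.I*y*i)) y := by
    intro i y
    have b0 : HasDerivAt (fun z : ℂ => Complex.exp ((2*Real.pi*Complex.I*i) * z))
        ((2*Real.pi*Complex.I*i) * Complex.exp ((2*Real.pi*Complex.I*i) * (y:ℂ))) (y:ℂ) := by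
      have g : HasDerivAt (fun z : ℂ => (2*Real.pi*Complex.I*(i:ℂ)) * z)
          (2*Real.pi*Complex.I*(i:ℂ)) (y:ℂ) := by
        simpa using (hasDerivAt_id (y:ℂ)).const_mul (2*Real.pi*Complex.I*(i:ℂ))
      have hcmp := (Complex.hasDerivAt_exp ((2*Real.pi*Complex.I*i) * (y:ℂ))).comp (y:ℂ) g
      exact hcmp.congr_deriv (by ring)
    have base := b0.comp_ofReal
    have h2 := base.const_mul (c i)
    have hfn : (fun s : ℝ => c i * Complex.exp ((2*Real.pi*Complex.I*(i:ℂ)) * (s:ℝ)))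
        = fun s : ℝ => c i * Complex.exp (2*Real.pi*Complex.I*(s:ℝ)*(i:ℂ)) := by
      funext s; congr 1; ring
    rw [hfn] at h2
    have e : (2*Real.pi*Complex.I*(i:ℂ)) * (y:ℝ) = 2*Real.pi*Complex.I*(y:ℝ)*(i:ℂ) := by ring
    exact h2.congr_deriv (by rw [← e]; ring)
  have hder : ∀ y : ℝ,
      HasDerivAt (fun s : ℝ => ∑ i : Fin M, c i * Complex.exp (2*Real.pi*Complex.I*s*i))
        (∑ i : Fin M, c i * (2*Real.pi*Complex.I*i) * Complex.exp (2*Real.pi*Complex.I*y*i)) y :=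
    fun y => HasDerivAt.fun_sum (fun i _ => hterm i y)
  have key := (convex_univ : Convex ℝ (Set.univ : Set ℝ)).norm_image_sub_le_of_norm_hasDerivWithin_le
    (f := fun s : ℝ => ∑ i : Fin M, c i * Complex.exp (2*Real.pi*Complex.I*s*i))
    (f' := fun y => ∑ i : Fin M, c i * (2*Real.pi*Complex.I*i)
        * Complex.exp (2*Real.pi*Complex.I*y*i))
    (fun y _ => (hder y).hasDerivWithinAt) (fun y _ => dnorm M c C hC y)
    (Set.mem_univ a) (Set.mem_univ b)
  simpa [Real.norm_eq_abs] using key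

end helpers

/-- dual-norm sandwich between grid and continuum. For
`v_k(f) = Σ_{i=0}^{M−1} c^{(k)}_i·exp(2πi·f·i)` and `S(f) = sqrt(Σ_k |v_k(f)|²)`, if
`N > 2πMK` then
`max_{j < N} S(j/N) ≤ sup_{f ∈ [0,1)} S(f) ≤ (1 − 2πMK/N)^{−1/2}·max_{j < N} S(j/N)`. -/
theorem stmt_13 (M K : ℕ) (hM : 1 ≤ M) (hK : 1 ≤ K) (c : Fin K → Fin M → ℂ)
    (v : Fin K → ℝ → ℂ)
    (hv : ∀ k (f : ℝ),
      v k f = ∑ i : Fin M, c k i * Complex.exp (2 * Real.pi * Complex.I * f * i))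
    (S : ℝ → ℝ) (hS : ∀ f, S f = Real.sqrt (∑ k, ‖v k f‖ ^ 2))
    (N : ℕ) (hN : 2 * Real.pi * M * K < N) :
    (⨆ j : Fin N, S ((j : ℝ) / N)) ≤ sSup (S '' Set.Ico (0 : ℝ) 1) ∧
    sSup (S '' Set.Ico (0 : ℝ) 1)
      ≤ (1 - 2 * Real.pi * M * K / N) ^ (-(1 : ℝ) / 2) * ⨆ j : Fin N, S ((j : ℝ) / N) := by
  have hπ := Real.pi_pos
  have hM1 : (1:ℝ) ≤ (M:ℝ) := by exact_mod_cast hM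
  have hK1 : (1:ℝ) ≤ (K:ℝ) := by exact_mod_cast hK
  have hMpos : (0:ℝ) < (M:ℝ) := lt_of_lt_of_le one_pos hM1
  have hKpos : (0:ℝ) < (K:ℝ) := lt_of_lt_of_le one_pos hK1
  have hMK : (0:ℝ) < 2 * Real.pi * M * K :=
    mul_pos (mul_pos (mul_pos two_pos hπ) hMpos) hKpos
  have hNR : (0:ℝ) < (N:ℝ) := lt_trans hMK hN
  have hNpos : 0 < N := by exact_mod_cast hNR
  haveI : Nonempty (Fin N) := ⟨⟨0, hNpos⟩⟩
  -- continuity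
  have hvc : ∀ k, Continuous (v k) := by
    intro k
    have : v k = fun f : ℝ => ∑ i : Fin M, c k i
        * Complex.exp (2 * Real.pi * Complex.I * f * i) := funext (hv k)
    rw [this]
    apply continuous_finset_sum _ fun i _ => ?_
    apply continuous_const.mul
    apply Complex.continuous_exp.comp
    fun_prop
  have hScont : Continuous S := by
    have : S = fun f => Real.sqrt (∑ k, ‖v k f‖ ^ 2) := funext hS
    rw [this]
    exact Real.continuous_sqrt.comp
      (continuous_finset_sum _ fun k _ => ((hvc k).norm.pow 2))
  have hS0 : ∀ f, 0 ≤ S f := fun f => by rw [hS]; exact Real.sqrt_nonneg _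
  -- periodicity
  have hvper : ∀ k (f : ℝ), v k (f + 1) = v k f := by
    intro k f
    rw [hv, hv]
    refine Finset.sum_congr rfl fun i _ => ?_
    congr 1
    rw [show (2 * (Real.pi:ℂ) * Complex.I * ((f:ℝ)+1 : ℝ) * i)
        = 2 * Real.pi * Complex.I * (f:ℝ) * i + (i:ℕ) * (2 * Real.pi * Complex.I) from by
      push_cast; ring]
    rw [Complex.exp_add]
    rw [show ((i:ℕ) : ℂ) * (2 * (Real.pi:ℂ) * Complex.I) = ((i:ℕ) : ℤ) * (2 * Real.pi * Complex.I) from by push_cast; ring]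
    rw [Complex.exp_int_mul_two_pi_mul_I]
    ring
  have hper : ∀ f : ℝ, S (f + 1) = S f := by
    intro f; rw [hS, hS]
    congr 1
    exact Finset.sum_congr rfl fun k _ => by rw [hvper]
  have hperiodic : Function.Periodic S 1 := hper
  -- bounds
  set B := sSup (S '' Set.Ico (0:ℝ) 1) with hB
  clear_value B
  have hbdd : BddAbove (S '' Set.Ico (0:ℝ) 1) := by
    apply BddAbove.mono (Set.image_mono (f := S) Set.Ico_subset_Icc_self)
    exact (isCompact_Icc.image hScont).bddAbove
  have hmem : ∀ f ∈ Set.Ico (0:ℝ) 1, S f ≤ B := by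
    intro f hf
    rw [hB]
    exact le_csSup hbdd ⟨f, hf, rfl⟩
  have hB0 : 0 ≤ B := le_trans (hS0 0) (hmem 0 ⟨le_refl _, one_pos⟩)
  have hSle : ∀ f : ℝ, S f ≤ B := by
    intro f
    have h1 : S (Int.fract f) = S f := by
      have h2 := hperiodic.sub_int_mul_eq (x := f) (n := ⌊f⌋)
      rw [mul_one] at h2
      exact h2
    rw [← h1]
    exact hmem _ ⟨Int.fract_nonneg f, Int.fract_lt_one f⟩
  have hvB : ∀ k (y : ℝ), ‖v k y‖ ≤ B := by
    intro k y
    refine le_trans ?_ (hSle y)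
    rw [hS]
    rw [← Real.sqrt_sq (norm_nonneg (v k y))]
    apply Real.sqrt_le_sqrt
    exact Finset.single_le_sum (f := fun k => ‖v k y‖^2)
      (fun k _ => sq_nonneg _) (Finset.mem_univ k)
  -- Lipschitz bound on S
  have hlipk : ∀ k (a b : ℝ), ‖v k b - v k a‖ ≤ 2*Real.pi*M*B * |b - a| := by
    intro k a b
    rw [hv k a, hv k b]
    exact lipsch M (c k) B (fun y => by rw [← hv]; exact hvB k y) a b
  have hlip : ∀ a b : ℝ, |S b - S a| ≤ (2*Real.pi*M*B*Real.sqrt K) * |b - a| := by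
    intro a b
    set Va : EuclideanSpace ℂ (Fin K) := WithLp.toLp 2 (fun k => v k a) with hVa
    set Vb : EuclideanSpace ℂ (Fin K) := WithLp.toLp 2 (fun k => v k b) with hVb
    have hna : S a = ‖Va‖ := by rw [hS, EuclideanSpace.norm_eq]
    have hnb : S b = ‖Vb‖ := by rw [hS, EuclideanSpace.norm_eq]
    rw [hna, hnb]
    refine le_trans (abs_norm_sub_norm_le Vb Va) ?_
    have : ‖Vb - Va‖ = Real.sqrt (∑ k, ‖v k b - v k a‖^2) := by
      rw [EuclideanSpace.norm_eq]
      congr 1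
    rw [this]
    have hbound : (∑ k : Fin K, ‖v k b - v k a‖^2)
        ≤ (K:ℝ) * (2*Real.pi*M*B * |b - a|)^2 := by
      calc (∑ k : Fin K, ‖v k b - v k a‖^2)
          ≤ ∑ _k : Fin K, (2*Real.pi*M*B * |b - a|)^2 := by
            apply Finset.sum_le_sum fun k _ => ?_
            have := hlipk k a b
            have h0 : (0:ℝ) ≤ ‖v k b - v k a‖ := norm_nonneg _
            nlinarith
        _ = (K:ℝ) * (2*Real.pi*M*B * |b - a|)^2 := by
            rw [Finset.sum_const]; simp [mul_comm]
    refine le_trans (Real.sqrt_le_sqrt hbound) ?_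
    rw [Real.sqrt_mul (Nat.cast_nonneg K), Real.sqrt_sq (by positivity)]
    ring_nf
    exact le_refl _
  -- attain max
  obtain ⟨x₀, hx₀, hmax⟩ := isCompact_Icc.exists_isMaxOn
    (Set.nonempty_Icc.mpr zero_le_one) hScont.continuousOn
  have hBx : B = S x₀ := by
    apply le_antisymm
    · rw [hB]
      refine csSup_le ⟨S 0, ⟨0, ⟨le_refl _, one_pos⟩, rfl⟩⟩ ?_
      rintro y ⟨f, hf, rfl⟩
      exact hmax (Set.Ico_subset_Icc_self hf)
    · exact hSle x₀
  set m : ℤ := round ((N:ℝ) * x₀) with hm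
  clear_value m
  have hroundA : |(N:ℝ) * x₀ - m| ≤ 1/2 := by
    rw [hm]; exact abs_sub_round _
  have hround := abs_le.mp hroundA
  have hx00 : 0 ≤ x₀ := hx₀.1
  have hx01 : x₀ ≤ 1 := hx₀.2
  have hm0 : 0 ≤ m := by
    by_contra h
    push_neg at h
    have h0 : m ≤ -1 := by omega
    have h1 : (m:ℝ) ≤ -1 := by exact_mod_cast h0
    have h2 : 0 ≤ (N:ℝ)*x₀ := mul_nonneg hNR.le hx00
    linarith [hround.2]
  have hmN : m ≤ (N:ℤ) := by
    by_contra h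
    push_neg at h
    have h1 : ((N:ℝ)) + 1 ≤ (m:ℝ) := by exact_mod_cast h
    have h2 : (N:ℝ)*x₀ ≤ N := by nlinarith
    linarith [hround.1]
  have hdist : |x₀ - (m:ℝ)/N| ≤ 1/(2*N) := by
    have he : x₀ - (m:ℝ)/N = ((N:ℝ)*x₀ - m)/N := by field_simp
    rw [he, abs_div, abs_of_pos hNR]
    calc |(N:ℝ)*x₀ - m| / N ≤ (1/2)/(N:ℝ) := by
          gcongr
      _ = 1/(2*N) := by ring
  set G := ⨆ j : Fin N, S ((j:ℝ)/N) with hG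
  clear_value G
  have hgrid : S ((m:ℝ)/N) ≤ G := by
    rcases eq_or_lt_of_le hmN with he | hlt
    · have h1 : (m:ℝ)/N = 1 := by
        rw [he]; push_cast; exact div_self hNR.ne'
      rw [h1]
      have hS1 : S 1 = S 0 := by
        have := hper 0; rw [zero_add] at this; exact this
      rw [hS1]
      have h2 : (((⟨0,hNpos⟩ : Fin N) : ℝ))/N = 0 := by simp
      have h3 : S 0 = S ((((⟨0,hNpos⟩ : Fin N) : ℝ))/N) := by rw [h2]
      rw [h3, hG]
      exact le_ciSup (f := fun j : Fin N => S ((j:ℝ)/N))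
        (Set.Finite.bddAbove (Set.finite_range _)) _
    · have hjlt : m.toNat < N := by omega
      have hj : (((⟨m.toNat, hjlt⟩ : Fin N) : ℝ)) = (m:ℝ) := by
        have h4 : ((m.toNat : ℤ) : ℝ) = (m:ℝ) := by
          rw [Int.toNat_of_nonneg hm0]
        push_cast at h4 ⊢
        exact h4
      rw [← hj, hG]
      exact le_ciSup (f := fun j : Fin N => S ((j:ℝ)/N))
        (Set.Finite.bddAbove (Set.finite_range _)) _
  have hGrid2 : B ≤ G + (2*Real.pi*M*B*Real.sqrt K) * (1/(2*N)) := by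
    have h1 := hlip ((m:ℝ)/N) x₀
    have h2 : S x₀ - S ((m:ℝ)/N) ≤ (2*Real.pi*M*B*Real.sqrt K) * (1/(2*N)) :=
      le_trans (le_trans (le_abs_self _) h1)
        (mul_le_mul_of_nonneg_left hdist (by positivity))
    have h3 : S x₀ ≤ G + (2*Real.pi*M*B*Real.sqrt K) * (1/(2*N)) := by linarith
    calc B = S x₀ := hBx
      _ ≤ _ := h3
  constructor
  · rw [hG, hB]
    apply ciSup_le
    intro j
    apply le_csSup hbdd
    refine ⟨(j:ℝ)/N, ⟨by positivity, ?_⟩, rfl⟩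
    rw [div_lt_one hNR]
    exact_mod_cast j.isLt
  · set a : ℝ := 2*Real.pi*M*K/N with ha
    have ha1 : a < 1 := by rw [ha, div_lt_one hNR]; exact hN
    have ha0 : 0 < a := div_pos hMK hNR
    clear_value a
    have hsK : Real.sqrt K ≤ K := by
      have hKK : (K:ℝ) ≤ (K:ℝ)^2 := by
        have h9 := mul_le_mul_of_nonneg_left hK1 hKpos.le
        rw [mul_one] at h9
        calc (K:ℝ) ≤ (K:ℝ) * (K:ℝ) := h9
          _ = (K:ℝ)^2 := (sq (K:ℝ)).symm
      calc Real.sqrt K ≤ Real.sqrt ((K:ℝ)^2) := Real.sqrt_le_sqrt hKK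
        _ = K := Real.sqrt_sq hKpos.le
    have hstep : B * Real.sqrt (1 - a) ≤ G := by
      have hs1 : Real.sqrt (1-a) ≤ 1 - a/2 := by
        have hexp : (1 - a/2)^2 = 1 - a + a^2/4 := by ring
        have hq : 1 - a ≤ (1 - a/2)^2 := by
          rw [hexp]
          have := sq_nonneg a
          linarith
        calc Real.sqrt (1-a) ≤ Real.sqrt ((1-a/2)^2) := Real.sqrt_le_sqrt hq
          _ = 1 - a/2 := Real.sqrt_sq (by linarith)
      have key : 2*Real.pi*(M:ℝ)*B*Real.sqrt K ≤ 2*Real.pi*M*B*K :=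
        mul_le_mul_of_nonneg_left hsK (by positivity)
      have hterm : (2*Real.pi*M*B*Real.sqrt K) * (1/(2*N)) ≤ B * (a/2) := by
        calc (2*Real.pi*M*B*Real.sqrt K) * (1/(2*N))
            ≤ (2*Real.pi*(M:ℝ)*B*K) * (1/(2*N)) :=
              mul_le_mul_of_nonneg_right key (by positivity)
          _ = B * (a/2) := by rw [ha]; ring
      calc B * Real.sqrt (1-a) ≤ B * (1 - a/2) := mul_le_mul_of_nonneg_left hs1 hB0
        _ = B - B*(a/2) := by ring
        _ ≤ G := by linarith
    have hs0 : 0 < Real.sqrt (1-a) := Real.sqrt_pos.mpr (by linarith)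
    have hpow : (1 - a) ^ (-(1:ℝ)/2) = (Real.sqrt (1-a))⁻¹ := by
      rw [show -(1:ℝ)/2 = -(1/2 : ℝ) from by ring]
      rw [Real.rpow_neg (by linarith)]
      rw [← Real.sqrt_eq_rpow]
    rw [hpow]
    calc B = (Real.sqrt (1-a))⁻¹ * (Real.sqrt (1-a) * B) := by
          rw [← mul_assoc, inv_mul_cancel₀ hs0.ne', one_mul]
      _ ≤ (Real.sqrt (1-a))⁻¹ * G := by
          apply mul_le_mul_of_nonneg_left _ (inv_nonneg.mpr hs0.le)
          rw [mul_comm]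
          exact hstep
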